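/- Let λ₁, λ₂, λ₃, μ₁, μ₂, μ₃ be real numbers, ε, ε̃ ∈ {-1,1}, and c ≠ c̃ real numbers satisfying c + ε·λᵢ·λⱼ = c̃ + ε̃·μᵢ·μⱼ for all 1 ≤ i ≠ j ≤ 3. If λ₃ = 0, then μ₁ = μ₂ =: μ, and c - c̃ + ε·λ₁·λ₂ = ε̃·μ² and c - c̃ = ε̃·μ·μ₃. -/
import Mathlib

/-- Lemma 3.2(b) algebraic content: if `c + ε λᵢ λⱼ = c̃ + ε̃ μᵢ μⱼ` for all `i ≠ j`
and `λ₃ = 0`, then `μ₁ = μ₂ = μ`, `c - c̃ + ε λ₁ λ₂ = ε̃ μ²` and `c - c̃ = ε̃ μ μ₃`. -/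
theorem stmt_8 (l₁ l₂ l₃ m₁ m₂ m₃ ε εt c ct : ℝ)
    (hε : ε = 1 ∨ ε = -1) (hεt : εt = 1 ∨ εt = -1) (hc : c ≠ ct)
    (h₁₂ : c + ε * l₁ * l₂ = ct + εt * m₁ * m₂)
    (h₁₃ : c + ε * l₁ * l₃ = ct + εt * m₁ * m₃)
    (h₂₃ : c + ε * l₂ * l₃ = ct + εt * m₂ * m₃)
    (hl : l₃ = 0) :
    m₁ = m₂ ∧ c - ct + ε * l₁ * l₂ = εt * m₁ ^ 2 ∧ c - ct = εt * m₁ * m₃ := by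
  subst hl
  have h1 : c - ct = εt * m₁ * m₃ := by linarith [h₁₃]
  have h2 : c - ct = εt * m₂ * m₃ := by linarith [h₂₃]
  have hεt0 : εt ≠ 0 := by rcases hεt with h | h <;> simp [h]
  have hm₃ : m₃ ≠ 0 := by
    intro h; apply hc; have := h1; rw [h] at this; linarith
  have hm : m₁ = m₂ := by
    have : εt * m₁ * m₃ = εt * m₂ * m₃ := by linarith
    have h3 : εt * m₃ * m₁ = εt * m₃ * m₂ := by linear_combination this
    exact mul_left_cancel₀ (mul_ne_zero hεt0 hm₃) h3
  refine ⟨hm, ?_, h1⟩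
  subst hm; linear_combination h₁₂
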